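/- For n ≥ 8, the term 3 · 2^{n+1} · (2n-4)!/(n!(n-2)!) · C(2,2) (the i = n summand) exceeds the absolute value of the sum of all other terms in the expression ((7n²-3n-2)/2)·(-1)^{n-1} + 3·Σ_{i=2}^{n-1} 2^{i+1}·(2i-4)!/(i!(i-2)!)·C(n-i+2,2)·(-1)^{n-i}; consequently the full alternating expression for S_n(1342) is positive and bounded above by twice its last summand. -/

import Mathlib

open Finset

private def bq (i : ℕ) : ℚ :=
  2 ^ (i + 1) * (Nat.factorial (2 * i - 4) : ℚ) /
    (Nat.factorial i * Nat.factorial (i - 2))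

private lemma bq_pos (i : ℕ) : 0 < bq i := by
  unfold bq
  positivity

private lemma bq_ratio (k : ℕ) :
    bq (k + 3) * (((k : ℚ) + 3) * ((k : ℚ) + 1)) =
      bq (k + 2) * (2 * (2 * (k : ℚ) + 2) * (2 * (k : ℚ) + 1)) := by
  unfold bq
  have h1 : 2 * (k + 3) - 4 = (2 * k + 1) + 1 := by omega
  have h2 : 2 * (k + 2) - 4 = 2 * k := by omega
  have h3 : (k + 3) - 2 = k + 1 := by omega
  have h4 : (k + 2) - 2 = k := by omega
  rw [h1, h2, h3, h4, Nat.factorial_succ (2 * k + 1), Nat.factorial_succ (2 * k),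
    show k + 3 = (k + 2) + 1 from rfl, Nat.factorial_succ (k + 2),
    Nat.factorial_succ k]
  have e1 : ((Nat.factorial (2 * k) : ℚ)) ≠ 0 := by
    exact_mod_cast Nat.factorial_ne_zero _
  have e2 : ((Nat.factorial (k + 2) : ℚ)) ≠ 0 := by
    exact_mod_cast Nat.factorial_ne_zero _
  have e3 : ((Nat.factorial k : ℚ)) ≠ 0 := by
    exact_mod_cast Nat.factorial_ne_zero _
  push_cast
  field_simp
  ring

private lemma T_mono (n i : ℕ) (hi : 3 ≤ i) (hin : i ≤ n - 2) (hn : 8 ≤ n) :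
    bq i * (Nat.choose (n - i + 2) 2 : ℚ) ≤
      bq (i + 1) * (Nat.choose (n - (i + 1) + 2) 2 : ℚ) := by
  obtain ⟨j, rfl⟩ : ∃ j, i = j + 3 := ⟨i - 3, by omega⟩
  obtain ⟨k, hk⟩ : ∃ k, n - (j + 3) = k + 2 := ⟨n - (j + 3) - 2, by omega⟩
  have hk' : n - (j + 3 + 1) = k + 1 := by omega
  rw [hk, hk']
  have hr := bq_ratio (j + 1)
  have hb := bq_pos (j + 3)
  have hb' := bq_pos (j + 4)
  have hc1 : (Nat.choose (k + 2 + 2) 2 : ℚ) = ((k : ℚ) + 4) * ((k : ℚ) + 3) / 2 := by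
    rw [Nat.cast_choose_two]; push_cast; ring
  have hc2 : (Nat.choose (k + 1 + 2) 2 : ℚ) = ((k : ℚ) + 3) * ((k : ℚ) + 2) / 2 := by
    rw [Nat.cast_choose_two]; push_cast; ring
  rw [hc1, hc2]
  have hr' : bq (j + 4) * (((j : ℚ) + 4) * ((j : ℚ) + 2)) =
      bq (j + 3) * (2 * (2 * (j : ℚ) + 4) * (2 * (j : ℚ) + 3)) := by
    have := bq_ratio (j + 1)
    push_cast at this ⊢
    convert this using 2 <;> push_cast <;> ring
  have key : ((k:ℚ)+4)*((k:ℚ)+3)*(((j:ℚ)+4)*((j:ℚ)+2)) ≤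
      2*(2*(j:ℚ)+4)*(2*(j:ℚ)+3)*(((k:ℚ)+3)*((k:ℚ)+2)) := by
    have hj : (0:ℚ) ≤ (j:ℚ) := by positivity
    have hk0 : (0:ℚ) ≤ (k:ℚ) := by positivity
    nlinarith [mul_nonneg hj hk0, mul_nonneg (mul_nonneg hj hj) hk0,
      mul_nonneg hj hj, mul_nonneg hk0 hk0]
  have hpos : (0:ℚ) < ((j:ℚ)+4)*((j:ℚ)+2) := by positivity
  rw [show j + 3 + 1 = j + 4 from rfl]
  apply le_of_mul_le_mul_right _ hpos
  have h2 : bq (j + 4) * (((k:ℚ)+3)*((k:ℚ)+2)/2) * (((j:ℚ)+4)*((j:ℚ)+2)) =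
      bq (j + 3) * (2*(2*(j:ℚ)+4)*(2*(j:ℚ)+3)) * (((k:ℚ)+3)*((k:ℚ)+2)/2) := by
    linarith [congrArg (fun x => x * (((k:ℚ)+3)*((k:ℚ)+2)/2)) hr']
  rw [h2]
  nlinarith [mul_le_mul_of_nonneg_left key hb.le]

private lemma alt_bound (T : ℕ → ℚ) (hT : ∀ i, 0 ≤ T i) :
    ∀ m, 3 ≤ m → (∀ i, 3 ≤ i → i < m → T i ≤ T (i + 1)) →
      0 ≤ (∑ i ∈ Icc 3 m, (-1 : ℚ) ^ (m - i) * T i) ∧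
        (∑ i ∈ Icc 3 m, (-1 : ℚ) ^ (m - i) * T i) ≤ T m := by
  intro m
  induction m with
  | zero => omega
  | succ m ih =>
    intro hm hmono
    rcases Nat.lt_or_ge 3 (m + 1) with h | h
    · have hm3 : 3 ≤ m := by omega
      have hrec := ih hm3 (fun i h1 h2 => hmono i h1 (by omega))
      rw [Finset.sum_Icc_succ_top (by omega : 3 ≤ m + 1)]
      have hflip : (∑ i ∈ Icc 3 m, (-1 : ℚ) ^ (m + 1 - i) * T i) =
          -(∑ i ∈ Icc 3 m, (-1 : ℚ) ^ (m - i) * T i) := by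
        rw [← Finset.sum_neg_distrib]
        apply Finset.sum_congr rfl
        intro i hi
        simp only [Finset.mem_Icc] at hi
        have : m + 1 - i = (m - i) + 1 := by omega
        rw [this, pow_succ]
        ring
      rw [hflip]
      have hlast : T m ≤ T (m + 1) := hmono m hm3 (by omega)
      constructor
      · simp only [Nat.sub_self, pow_zero, one_mul]
        linarith [hrec.1, hrec.2]
      · simp only [Nat.sub_self, pow_zero, one_mul]
        linarith [hrec.1, hT m]
    · have hm2 : m = 2 := by omega
      subst hm2
      simp [Finset.Icc_self, hT 3]

private lemma bq_lower : ∀ n : ℕ, 8 ≤ n →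
    (7 * (n : ℚ) ^ 2 - 3 * n - 2) / 2 + 6 * n * (n - 1) ≤ bq n := by
  intro n hn
  induction n with
  | zero => omega
  | succ m ih =>
    rcases Nat.lt_or_ge m 8 with h | h
    · have : m = 7 := by omega
      subst this
      unfold bq
      norm_num [Nat.factorial]
    · have hrec := ih h
      obtain ⟨k, rfl⟩ : ∃ k, m = k + 6 := ⟨m - 6, by omega⟩
      have hr := bq_ratio (k + 4)
      have hb := bq_pos (k + 6)
      have hb' := bq_pos (k + 7)
      have hk : (8:ℚ) ≤ (k:ℚ) + 6 := by
        have : (2:ℚ) ≤ (k:ℚ) := by exact_mod_cast (by omega : 2 ≤ k)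
        linarith
      have hr' : bq (k + 7) * (((k:ℚ) + 7) * ((k:ℚ) + 5)) =
          bq (k + 6) * (2 * (2 * (k:ℚ) + 10) * (2 * (k:ℚ) + 9)) := by
        have := bq_ratio (k + 4)
        push_cast at this ⊢
        convert this using 2 <;> push_cast <;> ring
      push_cast at hrec ⊢
      nlinarith [mul_le_mul_of_nonneg_right hrec
          (show (0:ℚ) ≤ 2 * (2 * (k:ℚ) + 10) * (2 * (k:ℚ) + 9) by positivity),
        mul_pos hb' (show (0:ℚ) < ((k:ℚ) + 7) * ((k:ℚ) + 5) by positivity),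
        sq_nonneg ((k:ℚ)), mul_nonneg (show (0:ℚ) ≤ (k:ℚ) by positivity)
          (show (0:ℚ) ≤ (k:ℚ)*(k:ℚ) by positivity)]
theorem last_summand_dominates (n : ℕ) (hn : 8 ≤ n) :
    letI L : ℚ := 3 * 2 ^ (n + 1) * (Nat.factorial (2 * n - 4) : ℚ) /
      (Nat.factorial n * Nat.factorial (n - 2)) * (Nat.choose 2 2)
    letI R : ℚ := ((7 * (n : ℚ) ^ 2 - 3 * n - 2) / 2) * (-1) ^ (n - 1) +
      3 * ∑ i ∈ Finset.Icc 2 (n - 1),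
        2 ^ (i + 1) * (Nat.factorial (2 * i - 4) : ℚ) /
          (Nat.factorial i * Nat.factorial (i - 2)) *
          (Nat.choose (n - i + 2) 2) * (-1) ^ (n - i)
    |R| < L ∧ 0 < R + L ∧ R + L ≤ 2 * L := by
  have hb := bq_pos n
  have hb1 := bq_pos (n - 1)
  have hn8 : (8 : ℚ) ≤ (n : ℚ) := by exact_mod_cast hn
  set T : ℕ → ℚ := fun i => bq i * (Nat.choose (n - i + 2) 2 : ℚ) with hTdef
  have hT0 : ∀ i, 0 ≤ T i := fun i => mul_nonneg (bq_pos i).le (by positivity)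
  -- the sum rewritten
  have hterm : ∀ i, (2 ^ (i + 1) * (Nat.factorial (2 * i - 4) : ℚ) /
      (Nat.factorial i * Nat.factorial (i - 2)) *
      (Nat.choose (n - i + 2) 2) * (-1) ^ (n - i))
      = (-1 : ℚ) ^ (n - i) * T i := by
    intro i
    simp only [hTdef, bq]
    ring
  have hsplit : Finset.Icc 2 (n - 1) = insert 2 (Finset.Icc 3 (n - 1)) := by
    ext x
    simp only [Finset.mem_Icc, Finset.mem_insert]
    omega
  have h2notin : 2 ∉ Finset.Icc 3 (n - 1) := by simp
  have hflip : (∑ i ∈ Finset.Icc 3 (n - 1), (-1 : ℚ) ^ (n - i) * T i) =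
      -(∑ i ∈ Finset.Icc 3 (n - 1), (-1 : ℚ) ^ (n - 1 - i) * T i) := by
    rw [← Finset.sum_neg_distrib]
    apply Finset.sum_congr rfl
    intro i hi
    simp only [Finset.mem_Icc] at hi
    have : n - i = (n - 1 - i) + 1 := by omega
    rw [this, pow_succ]
    ring
  have hmono : ∀ i, 3 ≤ i → i < n - 1 → T i ≤ T (i + 1) :=
    fun i h1 h2 => T_mono n i h1 (by omega) hn
  have halt := alt_bound T hT0 (n - 1) (by omega) hmono
  have hSsum : (∑ i ∈ Finset.Icc 2 (n - 1),
      2 ^ (i + 1) * (Nat.factorial (2 * i - 4) : ℚ) /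
        (Nat.factorial i * Nat.factorial (i - 2)) *
        (Nat.choose (n - i + 2) 2) * (-1) ^ (n - i))
      = (-1 : ℚ) ^ (n - 2) * T 2
        - (∑ i ∈ Finset.Icc 3 (n - 1), (-1 : ℚ) ^ (n - 1 - i) * T i) := by
    calc (∑ i ∈ Finset.Icc 2 (n - 1),
        2 ^ (i + 1) * (Nat.factorial (2 * i - 4) : ℚ) /
          (Nat.factorial i * Nat.factorial (i - 2)) *
          (Nat.choose (n - i + 2) 2) * (-1) ^ (n - i))
        = ∑ i ∈ Finset.Icc 2 (n - 1), (-1 : ℚ) ^ (n - i) * T i :=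
          Finset.sum_congr rfl (fun i _ => hterm i)
      _ = (-1 : ℚ) ^ (n - 2) * T 2
          + ∑ i ∈ Finset.Icc 3 (n - 1), (-1 : ℚ) ^ (n - i) * T i := by
          rw [hsplit, Finset.sum_insert h2notin]
      _ = _ := by rw [hflip]; ring
  -- bound on |S|
  have hSabs : |(∑ i ∈ Finset.Icc 2 (n - 1),
      2 ^ (i + 1) * (Nat.factorial (2 * i - 4) : ℚ) /
        (Nat.factorial i * Nat.factorial (i - 2)) *
        (Nat.choose (n - i + 2) 2) * (-1) ^ (n - i))| ≤ T 2 + T (n - 1) := by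
    rw [hSsum]
    have h1 : |(-1 : ℚ) ^ (n - 2) * T 2| = T 2 := by
      rw [abs_mul, abs_pow, abs_neg, abs_one, one_pow, one_mul,
        abs_of_nonneg (hT0 2)]
    have h2 := le_abs_self ((-1 : ℚ) ^ (n - 2) * T 2)
    have h3 := neg_abs_le ((-1 : ℚ) ^ (n - 2) * T 2)
    rw [h1] at h2 h3
    rw [abs_le]
    constructor
    · linarith [halt.2]
    · linarith [halt.1]
  -- explicit values
  have hT2 : T 2 = 4 * ((n : ℚ) * ((n : ℚ) - 1) / 2) := by
    simp only [hTdef]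
    have : n - 2 + 2 = n := by omega
    rw [this, Nat.cast_choose_two]
    have : bq 2 = 4 := by
      unfold bq
      norm_num [Nat.factorial]
    rw [this]
  have hTn1 : T (n - 1) = 3 * bq (n - 1) := by
    simp only [hTdef]
    have : n - (n - 1) + 2 = 3 := by omega
    rw [this]
    norm_num [Nat.choose]
    ring
  -- ratio at the top
  have hr : bq n * ((n : ℚ) * ((n : ℚ) - 2)) =
      bq (n - 1) * (2 * (2 * (n : ℚ) - 4) * (2 * (n : ℚ) - 5)) := by
    have h := bq_ratio (n - 3)
    have e1 : n - 3 + 3 = n := by omega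
    have e2 : n - 3 + 2 = n - 1 := by omega
    have e3 : ((n - 3 : ℕ) : ℚ) = (n : ℚ) - 3 := by
      push_cast [Nat.cast_sub (by omega : 3 ≤ n)]
      ring
    rw [e1, e2, e3] at h
    linear_combination h
  have hpoly := bq_lower n hn
  -- key numeric inequality
  have h9 : 9 * bq (n - 1) < 2 * bq n := by
    have hq : (0 : ℚ) < 2 * (2 * (n : ℚ) - 4) * (2 * (n : ℚ) - 5) := by nlinarith
    rw [← mul_lt_mul_iff_of_pos_right hq]
    nlinarith [hr, mul_pos hb (show (0:ℚ) < 7*(n:ℚ)^2 - 54*(n:ℚ) + 80 by nlinarith)]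
  have hLval : (3 * 2 ^ (n + 1) * (Nat.factorial (2 * n - 4) : ℚ) /
      (Nat.factorial n * Nat.factorial (n - 2)) * (Nat.choose 2 2)) = 3 * bq n := by
    unfold bq
    norm_num
    ring
  -- main abs bound
  have hmain : |((7 * (n : ℚ) ^ 2 - 3 * n - 2) / 2) * (-1) ^ (n - 1) +
      3 * ∑ i ∈ Finset.Icc 2 (n - 1),
        2 ^ (i + 1) * (Nat.factorial (2 * i - 4) : ℚ) /
          (Nat.factorial i * Nat.factorial (i - 2)) *
          (Nat.choose (n - i + 2) 2) * (-1) ^ (n - i)| < 3 * bq n := by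
    have habs1 : |((7 * (n : ℚ) ^ 2 - 3 * n - 2) / 2) * (-1) ^ (n - 1)|
        = (7 * (n : ℚ) ^ 2 - 3 * n - 2) / 2 := by
      rw [abs_mul, abs_pow, abs_neg, abs_one, one_pow, mul_one,
        abs_of_nonneg (by nlinarith : (0:ℚ) ≤ (7 * (n : ℚ) ^ 2 - 3 * n - 2) / 2)]
    calc |((7 * (n : ℚ) ^ 2 - 3 * n - 2) / 2) * (-1) ^ (n - 1) +
        3 * ∑ i ∈ Finset.Icc 2 (n - 1),
          2 ^ (i + 1) * (Nat.factorial (2 * i - 4) : ℚ) /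
            (Nat.factorial i * Nat.factorial (i - 2)) *
            (Nat.choose (n - i + 2) 2) * (-1) ^ (n - i)|
        ≤ (7 * (n : ℚ) ^ 2 - 3 * n - 2) / 2 + 3 * (T 2 + T (n - 1)) := by
          refine le_trans (abs_add_le _ _) ?_
          rw [habs1, abs_mul]
          have : |(3:ℚ)| = 3 := by norm_num
          rw [this]
          have := mul_le_mul_of_nonneg_left hSabs (by norm_num : (0:ℚ) ≤ 3)
          linarith
      _ < 3 * bq n := by
          rw [hT2, hTn1]
          linarith [hpoly, h9]
  refine ⟨?_, ?_, ?_⟩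
  · rw [hLval]
    exact hmain
  · rw [hLval]
    have := (abs_lt.mp hmain).1
    linarith
  · rw [hLval]
    have := (abs_lt.mp hmain).2
    linarith
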